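/- Define F2(x,t) = 12i√2·( 12t − 32t³ − 12xt + 16x³t + 64t³x − 8x⁴t − 64x²t³ − 128t⁵ + i·(48x²t² − 4x³ + 6x² + 160t⁴ − 48xt² + 48t² + 2x⁴ − 3x) ) and H2(x,t) = 1024t⁶ + 768x²t⁴ − 768t⁴x + 1920t⁴ + 192x⁴t² − 384x³t² + 288xt² + 288t² + 16x⁶ − 48x⁵ + 72x⁴ − 72x³ + 72x² − 36x + 9. Then the function q^[2](x,t) = √2·(√2/2 + F2(x,t)/H2(x,t))·e^{2it} is a solution of the focusing nonlinear Schrödinger equation on all of ℝ². (Equivalently, q1^[2] = q2^[2] = (√2/2 + F2/H2)·e^{2it} is a second-order rogue wave solution of the Manakov system.) -/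

import Mathlib

open Complex

noncomputable section

/-- The focusing nonlinear Schrödinger equation
`i·∂q/∂t + ∂²q/∂x² + 2|q|²·q = 0` for `q : ℝ × ℝ → ℂ`, written `q (x, t)`. -/
def NLS (q : ℝ × ℝ → ℂ) : Prop :=
  ∀ x t : ℝ,
    Complex.I * deriv (fun t' => q (x, t')) t
      + deriv (fun x' => deriv (fun x'' => q (x'', t)) x') x
      + 2 * (‖q (x, t)‖ : ℂ) ^ 2 * q (x, t) = 0

/-- The Manakov system for `q1 q2 : ℝ × ℝ → ℂ`. -/
def Manakov (q1 q2 : ℝ × ℝ → ℂ) : Prop :=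
  (∀ x t : ℝ,
    Complex.I * deriv (fun t' => q1 (x, t')) t
      + deriv (fun x' => deriv (fun x'' => q1 (x'', t)) x') x
      + 2 * ((‖q1 (x, t)‖ : ℂ) ^ 2 + (‖q2 (x, t)‖ : ℂ) ^ 2) * q1 (x, t) = 0) ∧
  (∀ x t : ℝ,
    Complex.I * deriv (fun t' => q2 (x, t')) t
      + deriv (fun x' => deriv (fun x'' => q2 (x'', t)) x') x
      + 2 * ((‖q1 (x, t)‖ : ℂ) ^ 2 + (‖q2 (x, t)‖ : ℂ) ^ 2) * q2 (x, t) = 0)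

/-- The denominator `H2` of the second-order non-symmetric rogue wave. -/
def H2 (x t : ℝ) : ℝ :=
  1024 * t ^ 6 + 768 * x ^ 2 * t ^ 4 - 768 * t ^ 4 * x + 1920 * t ^ 4
    + 192 * x ^ 4 * t ^ 2 - 384 * x ^ 3 * t ^ 2 + 288 * x * t ^ 2 + 288 * t ^ 2
    + 16 * x ^ 6 - 48 * x ^ 5 + 72 * x ^ 4 - 72 * x ^ 3 + 72 * x ^ 2 - 36 * x + 9

/-- The numerator `F2` of the second-order non-symmetric rogue wave:
`F2 = 12i√2·(A + i·B)` with real polynomials `A`, `B`. -/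
def F2 (x t : ℝ) : ℂ :=
  12 * Complex.I * ((Real.sqrt 2 : ℝ) : ℂ) *
    (((12 * t - 32 * t ^ 3 - 12 * x * t + 16 * x ^ 3 * t + 64 * t ^ 3 * x - 8 * x ^ 4 * t
          - 64 * x ^ 2 * t ^ 3 - 128 * t ^ 5 : ℝ) : ℂ)
      + Complex.I *
        ((48 * x ^ 2 * t ^ 2 - 4 * x ^ 3 + 6 * x ^ 2 + 160 * t ^ 4 - 48 * x * t ^ 2
            + 48 * t ^ 2 + 2 * x ^ 4 - 3 * x : ℝ) : ℂ))

/-- The second-order non-symmetric doubly-localized rogue wave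
`q^[2](x,t) = √2·(√2/2 + F2/H2)·e^{2it}` of the focusing NLS equation. -/
def qtwo (p : ℝ × ℝ) : ℂ :=
  ((Real.sqrt 2 : ℝ) : ℂ)
    * (((Real.sqrt 2 / 2 : ℝ) : ℂ) + F2 p.1 p.2 / ((H2 p.1 p.2 : ℝ) : ℂ))
    * Complex.exp (2 * Complex.I * (p.2 : ℂ))

theorem my_congr {E : Type*} [NormedAddCommGroup E] [NormedSpace ℝ E] {f : ℝ → E} {d d' : E}
    {x : ℝ} (h : HasDerivAt f d x) (e : d = d') : HasDerivAt f d' x := e ▸ h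

theorem my_congrC {f : ℂ → ℂ} {d d' : ℂ} {x : ℂ} (h : HasDerivAt f d x) (e : d = d') :
    HasDerivAt f d' x := e ▸ h



-- real polynomial definitions (A = Im-coefficient poly, B)

def pA (x t : ℝ) : ℝ := 12 * t - 32 * t ^ 3 - 12 * x * t + 16 * x ^ 3 * t + 64 * t ^ 3 * x - 8 * x ^ 4 * t - 64 * x ^ 2 * t ^ 3 - 128 * t ^ 5

def pB (x t : ℝ) : ℝ := 48 * x ^ 2 * t ^ 2 - 4 * x ^ 3 + 6 * x ^ 2 + 160 * t ^ 4 - 48 * x * t ^ 2 + 48 * t ^ 2 + 2 * x ^ 4 - 3 * x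

def pAx (x t : ℝ) : ℝ := (-32) * x ^ 3 * t + 48 * x ^ 2 * t - 128 * x * t ^ 3 + 64 * t ^ 3 - 12 * t

def pAxx (x t : ℝ) : ℝ := (-96) * x ^ 2 * t + 96 * x * t - 128 * t ^ 3

def pAt (x t : ℝ) : ℝ := (-8) * x ^ 4 + 16 * x ^ 3 - 192 * x ^ 2 * t ^ 2 + 192 * x * t ^ 2 - 12 * x - 640 * t ^ 4 - 96 * t ^ 2 + 12

def pBx (x t : ℝ) : ℝ := 8 * x ^ 3 - 12 * x ^ 2 + 96 * x * t ^ 2 + 12 * x - 48 * t ^ 2 - 3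

def pBxx (x t : ℝ) : ℝ := 24 * x ^ 2 - 24 * x + 96 * t ^ 2 + 12

def pBt (x t : ℝ) : ℝ := 96 * x ^ 2 * t - 96 * x * t + 640 * t ^ 3 + 96 * t

def pHx (x t : ℝ) : ℝ := 96 * x ^ 5 - 240 * x ^ 4 + 768 * x ^ 3 * t ^ 2 + 288 * x ^ 3 - 1152 * x ^ 2 * t ^ 2 - 216 * x ^ 2 + 1536 * x * t ^ 4 + 144 * x - 768 * t ^ 4 + 288 * t ^ 2 - 36

def pHxx (x t : ℝ) : ℝ := 480 * x ^ 4 - 960 * x ^ 3 + 2304 * x ^ 2 * t ^ 2 + 864 * x ^ 2 - 2304 * x * t ^ 2 - 432 * x + 1536 * t ^ 4 + 144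

def pHt (x t : ℝ) : ℝ := 384 * x ^ 4 * t - 768 * x ^ 3 * t + 3072 * x ^ 2 * t ^ 3 - 3072 * x * t ^ 3 + 576 * x * t + 6144 * t ^ 5 + 7680 * t ^ 3 + 576 * t

theorem hpA_x (x t : ℝ) : HasDerivAt (fun u : ℝ => pA u t) (pAx x t) x := by
  unfold pA pAx
  exact my_congr ((((((((hasDerivAt_const x ((12 * t : ℝ))).sub (hasDerivAt_const x ((32 * t ^ 3 : ℝ)))).sub (((hasDerivAt_id x).const_mul ((12 : ℝ))).mul_const (t : ℝ))).add (((hasDerivAt_pow 3 x).const_mul ((16 : ℝ))).mul_const (t : ℝ))).add ((hasDerivAt_id x).const_mul ((64 * t ^ 3 : ℝ)))).sub (((hasDerivAt_pow 4 x).const_mul ((8 : ℝ))).mul_const (t : ℝ))).sub (((hasDerivAt_pow 2 x).const_mul ((64 : ℝ))).mul_const (t ^ 3 : ℝ))).sub (hasDerivAt_const x ((128 * t ^ 5 : ℝ)))) (by push_cast; ring)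

theorem hpA_t (x t : ℝ) : HasDerivAt (fun u : ℝ => pA x u) (pAt x t) t := by
  unfold pA pAt
  exact my_congr (((((((((hasDerivAt_id t).const_mul ((12 : ℝ))).sub ((hasDerivAt_pow 3 t).const_mul ((32 : ℝ)))).sub ((hasDerivAt_id t).const_mul ((12 * x : ℝ)))).add ((hasDerivAt_id t).const_mul ((16 * x ^ 3 : ℝ)))).add (((hasDerivAt_pow 3 t).const_mul ((64 : ℝ))).mul_const (x : ℝ))).sub ((hasDerivAt_id t).const_mul ((8 * x ^ 4 : ℝ)))).sub ((hasDerivAt_pow 3 t).const_mul ((64 * x ^ 2 : ℝ)))).sub ((hasDerivAt_pow 5 t).const_mul ((128 : ℝ)))) (by push_cast; ring)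

theorem hpB_x (x t : ℝ) : HasDerivAt (fun u : ℝ => pB u t) (pBx x t) x := by
  unfold pB pBx
  exact my_congr ((((((((((hasDerivAt_pow 2 x).const_mul ((48 : ℝ))).mul_const (t ^ 2 : ℝ)).sub ((hasDerivAt_pow 3 x).const_mul ((4 : ℝ)))).add ((hasDerivAt_pow 2 x).const_mul ((6 : ℝ)))).add (hasDerivAt_const x ((160 * t ^ 4 : ℝ)))).sub (((hasDerivAt_id x).const_mul ((48 : ℝ))).mul_const (t ^ 2 : ℝ))).add (hasDerivAt_const x ((48 * t ^ 2 : ℝ)))).add ((hasDerivAt_pow 4 x).const_mul ((2 : ℝ)))).sub ((hasDerivAt_id x).const_mul ((3 : ℝ)))) (by push_cast; ring)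

theorem hpB_t (x t : ℝ) : HasDerivAt (fun u : ℝ => pB x u) (pBt x t) t := by
  unfold pB pBt
  exact my_congr (((((((((hasDerivAt_pow 2 t).const_mul ((48 * x ^ 2 : ℝ))).sub (hasDerivAt_const t ((4 * x ^ 3 : ℝ)))).add (hasDerivAt_const t ((6 * x ^ 2 : ℝ)))).add ((hasDerivAt_pow 4 t).const_mul ((160 : ℝ)))).sub ((hasDerivAt_pow 2 t).const_mul ((48 * x : ℝ)))).add ((hasDerivAt_pow 2 t).const_mul ((48 : ℝ)))).add (hasDerivAt_const t ((2 * x ^ 4 : ℝ)))).sub (hasDerivAt_const t ((3 * x : ℝ)))) (by push_cast; ring)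

theorem hH2_x (x t : ℝ) : HasDerivAt (fun u : ℝ => H2 u t) (pHx x t) x := by
  unfold H2 pHx
  exact my_congr (((((((((((((((hasDerivAt_const x ((1024 * t ^ 6 : ℝ))).add (((hasDerivAt_pow 2 x).const_mul ((768 : ℝ))).mul_const (t ^ 4 : ℝ))).sub ((hasDerivAt_id x).const_mul ((768 * t ^ 4 : ℝ)))).add (hasDerivAt_const x ((1920 * t ^ 4 : ℝ)))).add (((hasDerivAt_pow 4 x).const_mul ((192 : ℝ))).mul_const (t ^ 2 : ℝ))).sub (((hasDerivAt_pow 3 x).const_mul ((384 : ℝ))).mul_const (t ^ 2 : ℝ))).add (((hasDerivAt_id x).const_mul ((288 : ℝ))).mul_const (t ^ 2 : ℝ))).add (hasDerivAt_const x ((288 * t ^ 2 : ℝ)))).add ((hasDerivAt_pow 6 x).const_mul ((16 : ℝ)))).sub ((hasDerivAt_pow 5 x).const_mul ((48 : ℝ)))).add ((hasDerivAt_pow 4 x).const_mul ((72 : ℝ)))).sub ((hasDerivAt_pow 3 x).const_mul ((72 : ℝ)))).add ((hasDerivAt_pow 2 x).const_mul ((72 : ℝ)))).sub ((hasDerivAt_id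 x).const_mul ((36 : ℝ)))).add (hasDerivAt_const x ((9 : ℝ)))) (by push_cast; ring)

theorem hH2_t (x t : ℝ) : HasDerivAt (fun u : ℝ => H2 x u) (pHt x t) t := by
  unfold H2 pHt
  exact my_congr ((((((((((((((((hasDerivAt_pow 6 t).const_mul ((1024 : ℝ))).add ((hasDerivAt_pow 4 t).const_mul ((768 * x ^ 2 : ℝ)))).sub (((hasDerivAt_pow 4 t).const_mul ((768 : ℝ))).mul_const (x : ℝ))).add ((hasDerivAt_pow 4 t).const_mul ((1920 : ℝ)))).add ((hasDerivAt_pow 2 t).const_mul ((192 * x ^ 4 : ℝ)))).sub ((hasDerivAt_pow 2 t).const_mul ((384 * x ^ 3 : ℝ)))).add ((hasDerivAt_pow 2 t).const_mul ((288 * x : ℝ)))).add ((hasDerivAt_pow 2 t).const_mul ((288 : ℝ)))).add (hasDerivAt_const t ((16 * x ^ 6 : ℝ)))).sub (hasDerivAt_const t ((48 * x ^ 5 : ℝ)))).add (hasDerivAt_const t ((72 * x ^ 4 : ℝ)))).sub (hasDerivAt_const t ((72 * x ^ 3 : ℝ)))).add (hasDerivAt_const t ((72 * x ^ 2 : ℝ)))).sub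 (hasDerivAt_const t ((36 * x : ℝ)))).add (hasDerivAt_const t ((9 : ℝ)))) (by push_cast; ring)

theorem hpAx_x (x t : ℝ) : HasDerivAt (fun u : ℝ => pAx u t) (pAxx x t) x := by
  unfold pAx pAxx
  exact my_congr (((((((hasDerivAt_pow 3 x).const_mul (((-32) : ℝ))).mul_const (t : ℝ)).add (((hasDerivAt_pow 2 x).const_mul ((48 : ℝ))).mul_const (t : ℝ))).sub (((hasDerivAt_id x).const_mul ((128 : ℝ))).mul_const (t ^ 3 : ℝ))).add (hasDerivAt_const x ((64 * t ^ 3 : ℝ)))).sub (hasDerivAt_const x ((12 * t : ℝ)))) (by push_cast; ring)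

theorem hpBx_x (x t : ℝ) : HasDerivAt (fun u : ℝ => pBx u t) (pBxx x t) x := by
  unfold pBx pBxx
  exact my_congr (((((((hasDerivAt_pow 3 x).const_mul ((8 : ℝ))).sub ((hasDerivAt_pow 2 x).const_mul ((12 : ℝ)))).add (((hasDerivAt_id x).const_mul ((96 : ℝ))).mul_const (t ^ 2 : ℝ))).add ((hasDerivAt_id x).const_mul ((12 : ℝ)))).sub (hasDerivAt_const x ((48 * t ^ 2 : ℝ)))).sub (hasDerivAt_const x ((3 : ℝ)))) (by push_cast; ring)

theorem hpHx_x (x t : ℝ) : HasDerivAt (fun u : ℝ => pHx u t) (pHxx x t) x := by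
  unfold pHx pHxx
  exact my_congr ((((((((((((hasDerivAt_pow 5 x).const_mul ((96 : ℝ))).sub ((hasDerivAt_pow 4 x).const_mul ((240 : ℝ)))).add (((hasDerivAt_pow 3 x).const_mul ((768 : ℝ))).mul_const (t ^ 2 : ℝ))).add ((hasDerivAt_pow 3 x).const_mul ((288 : ℝ)))).sub (((hasDerivAt_pow 2 x).const_mul ((1152 : ℝ))).mul_const (t ^ 2 : ℝ))).sub ((hasDerivAt_pow 2 x).const_mul ((216 : ℝ)))).add (((hasDerivAt_id x).const_mul ((1536 : ℝ))).mul_const (t ^ 4 : ℝ))).add ((hasDerivAt_id x).const_mul ((144 : ℝ)))).sub (hasDerivAt_const x ((768 * t ^ 4 : ℝ)))).add (hasDerivAt_const x ((288 * t ^ 2 : ℝ)))).sub (hasDerivAt_const x ((36 : ℝ)))) (by push_cast; ring)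


theorem H2_pos (x t : ℝ) : 0 < H2 x t := by
  have h : H2 x t = 1024*(t^3)^2 + 768*(t^2*(x-1/2))^2 + 1728*(t^2)^2
      + 192*(t*(x^2-x-1))^2 + 192*(t*(x-1/4))^2 + 84*t^2
      + (4*x^3-6*x^2+9/2*x-9/4)^2 + 99/4*(x-7/22)^2 + 63/44 := by
    unfold H2; ring
  rw [h]; positivity

theorem hH2ne (x t : ℝ) : ((H2 x t : ℝ) : ℂ) ≠ 0 :=
  Complex.ofReal_ne_zero.mpr (ne_of_gt (H2_pos x t))

theorem F2_eq (x t : ℝ) :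
    F2 x t = 12 * Complex.I * ((Real.sqrt 2 : ℝ) : ℂ)
      * (((pA x t : ℝ) : ℂ) + Complex.I * ((pB x t : ℝ) : ℂ)) := rfl

/-- first x-derivative of f = c + F2/H2 -/
def D1 (x t : ℝ) : ℂ :=
  (12 * Complex.I * ((Real.sqrt 2 : ℝ) : ℂ)
      * (((pAx x t : ℝ) : ℂ) + Complex.I * ((pBx x t : ℝ) : ℂ)) * ((H2 x t : ℝ) : ℂ)
    - F2 x t * ((pHx x t : ℝ) : ℂ)) / ((H2 x t : ℝ) : ℂ) ^ 2

/-- second x-derivative of f -/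
def D2 (x t : ℝ) : ℂ :=
  ((12 * Complex.I * ((Real.sqrt 2 : ℝ) : ℂ)
        * (((pAxx x t : ℝ) : ℂ) + Complex.I * ((pBxx x t : ℝ) : ℂ)) * ((H2 x t : ℝ) : ℂ)
      + 12 * Complex.I * ((Real.sqrt 2 : ℝ) : ℂ)
        * (((pAx x t : ℝ) : ℂ) + Complex.I * ((pBx x t : ℝ) : ℂ)) * ((pHx x t : ℝ) : ℂ)
      - (12 * Complex.I * ((Real.sqrt 2 : ℝ) : ℂ)
          * (((pAx x t : ℝ) : ℂ) + Complex.I * ((pBx x t : ℝ) : ℂ)) * ((pHx x t : ℝ) : ℂ)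
        + F2 x t * ((pHxx x t : ℝ) : ℂ))) * ((H2 x t : ℝ) : ℂ) ^ 2
    - (12 * Complex.I * ((Real.sqrt 2 : ℝ) : ℂ)
        * (((pAx x t : ℝ) : ℂ) + Complex.I * ((pBx x t : ℝ) : ℂ)) * ((H2 x t : ℝ) : ℂ)
      - F2 x t * ((pHx x t : ℝ) : ℂ)) * (2 * ((H2 x t : ℝ) : ℂ) * ((pHx x t : ℝ) : ℂ)))
  / (((H2 x t : ℝ) : ℂ) ^ 2) ^ 2

/-- t-derivative of f -/
def DT (x t : ℝ) : ℂ :=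
  (12 * Complex.I * ((Real.sqrt 2 : ℝ) : ℂ)
      * (((pAt x t : ℝ) : ℂ) + Complex.I * ((pBt x t : ℝ) : ℂ)) * ((H2 x t : ℝ) : ℂ)
    - F2 x t * ((pHt x t : ℝ) : ℂ)) / ((H2 x t : ℝ) : ℂ) ^ 2

theorem hnum_x (x t : ℝ) : HasDerivAt (fun u : ℝ => F2 u t)
    (12 * Complex.I * ((Real.sqrt 2 : ℝ) : ℂ)
      * (((pAx x t : ℝ) : ℂ) + Complex.I * ((pBx x t : ℝ) : ℂ))) x :=
  (((hpA_x x t).ofReal_comp).add (((hpB_x x t).ofReal_comp).const_mul Complex.I)).const_mul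
    (12 * Complex.I * ((Real.sqrt 2 : ℝ) : ℂ))

theorem hnum_t (x t : ℝ) : HasDerivAt (fun u : ℝ => F2 x u)
    (12 * Complex.I * ((Real.sqrt 2 : ℝ) : ℂ)
      * (((pAt x t : ℝ) : ℂ) + Complex.I * ((pBt x t : ℝ) : ℂ))) t :=
  (((hpA_t x t).ofReal_comp).add (((hpB_t x t).ofReal_comp).const_mul Complex.I)).const_mul
    (12 * Complex.I * ((Real.sqrt 2 : ℝ) : ℂ))

theorem hf_x (x t : ℝ) :
    HasDerivAt (fun u : ℝ => ((Real.sqrt 2 / 2 : ℝ) : ℂ) + F2 u t / ((H2 u t : ℝ) : ℂ))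
      (D1 x t) x := by
  unfold D1
  exact ((hnum_x x t).div ((hH2_x x t).ofReal_comp) (hH2ne x t)).const_add _

theorem hf_t (x t : ℝ) :
    HasDerivAt (fun u : ℝ => ((Real.sqrt 2 / 2 : ℝ) : ℂ) + F2 x u / ((H2 x u : ℝ) : ℂ))
      (DT x t) t := by
  unfold DT
  exact ((hnum_t x t).div ((hH2_t x t).ofReal_comp) (hH2ne x t)).const_add _

theorem hD1_x (x t : ℝ) : HasDerivAt (fun u : ℝ => D1 u t) (D2 x t) x := by
  have h1 := ((((hpAx_x x t).ofReal_comp).add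
      (((hpBx_x x t).ofReal_comp).const_mul Complex.I)).const_mul
      (12 * Complex.I * ((Real.sqrt 2 : ℝ) : ℂ))).mul ((hH2_x x t).ofReal_comp)
  have h2 := (hnum_x x t).mul ((hpHx_x x t).ofReal_comp)
  have hden := ((hH2_x x t).pow 2).ofReal_comp
  have h3 := (h1.sub h2).div hden
      (by simp only [Pi.pow_apply]; push_cast; exact pow_ne_zero 2 (Complex.ofReal_ne_zero.mpr (ne_of_gt (H2_pos x t))))
  have heq : (fun u : ℝ => D1 u t)
      = (fun u : ℝ => (12 * Complex.I * ((Real.sqrt 2 : ℝ) : ℂ)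
          * (((pAx u t : ℝ) : ℂ) + Complex.I * ((pBx u t : ℝ) : ℂ)) * ((H2 u t : ℝ) : ℂ)
        - F2 u t * ((pHx u t : ℝ) : ℂ)) / ((H2 u t ^ 2 : ℝ) : ℂ)) := by
    funext u
    unfold D1
    push_cast
    ring
  rw [heq]
  unfold D2
  refine my_congr h3 ?_
  simp only [Pi.pow_apply, Pi.add_apply, Pi.mul_apply, Pi.sub_apply]
  push_cast
  ring

theorem hexp (t : ℝ) : HasDerivAt (fun u : ℝ => Complex.exp (2 * Complex.I * (u : ℂ)))
    (2 * Complex.I * Complex.exp (2 * Complex.I * (t : ℂ))) t := by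
  have h : HasDerivAt (fun z : ℂ => Complex.exp (2 * Complex.I * z))
      (2 * Complex.I * Complex.exp (2 * Complex.I * (t : ℂ))) ((t : ℝ) : ℂ) := by
    refine my_congrC (((hasDerivAt_id ((t : ℝ) : ℂ)).const_mul (2 * Complex.I)).cexp) ?_
    simp [id]; ring
  exact h.comp_ofReal

def NRM (x t : ℝ) : ℝ := 1/2 - 24 * pB x t / H2 x t + 288 * ((pA x t)^2 + (pB x t)^2) / (H2 x t)^2

theorem f_decomp (x t : ℝ) :
    ((Real.sqrt 2 / 2 : ℝ) : ℂ) + F2 x t / ((H2 x t : ℝ) : ℂ)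
      = ((Real.sqrt 2 / 2 - 12 * Real.sqrt 2 * pB x t / H2 x t : ℝ) : ℂ)
        + ((12 * Real.sqrt 2 * pA x t / H2 x t : ℝ) : ℂ) * Complex.I := by
  rw [F2_eq]
  push_cast
  linear_combination (12 * ((Real.sqrt 2 : ℝ) : ℂ) * ((pB x t : ℝ) : ℂ) / ((H2 x t : ℝ) : ℂ))
    * Complex.I_sq

theorem norm_f (x t : ℝ) :
    ‖((Real.sqrt 2 / 2 : ℝ) : ℂ) + F2 x t / ((H2 x t : ℝ) : ℂ)‖ ^ 2 = NRM x t := by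
  rw [f_decomp, Complex.sq_norm, Complex.normSq_add_mul_I]
  have hs : Real.sqrt 2 ^ 2 = 2 := Real.sq_sqrt (by norm_num)
  unfold NRM
  linear_combination (1/4 - 12 * pB x t / H2 x t
    + 144 * ((pA x t)^2 + (pB x t)^2) / (H2 x t)^2) * hs

theorem norm_exp (t : ℝ) : ‖Complex.exp (2 * Complex.I * (t : ℂ))‖ = 1 := by
  rw [Complex.norm_exp]
  simp

theorem norm_q1 (x t : ℝ) :
    ((‖(((Real.sqrt 2 / 2 : ℝ) : ℂ) + F2 x t / ((H2 x t : ℝ) : ℂ))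
        * Complex.exp (2 * Complex.I * (t : ℂ))‖ : ℝ) : ℂ) ^ 2 = ((NRM x t : ℝ) : ℂ) := by
  have h : ‖(((Real.sqrt 2 / 2 : ℝ) : ℂ) + F2 x t / ((H2 x t : ℝ) : ℂ))
      * Complex.exp (2 * Complex.I * (t : ℂ))‖ ^ 2 = NRM x t := by
    rw [norm_mul, _root_.norm_exp, mul_one, norm_f]
  rw [← Complex.ofReal_pow, h]

theorem norm_q2 (x t : ℝ) :
    ((‖((Real.sqrt 2 : ℝ) : ℂ) * (((Real.sqrt 2 / 2 : ℝ) : ℂ) + F2 x t / ((H2 x t : ℝ) : ℂ))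
        * Complex.exp (2 * Complex.I * (t : ℂ))‖ : ℝ) : ℂ) ^ 2 = 2 * ((NRM x t : ℝ) : ℂ) := by
  have hs : Real.sqrt 2 ^ 2 = 2 := Real.sq_sqrt (by norm_num)
  have hn : ‖((Real.sqrt 2 : ℝ) : ℂ)‖ ^ 2 = 2 := by
    rw [Complex.norm_real, Real.norm_eq_abs, _root_.sq_abs, hs]
  have h : ‖((Real.sqrt 2 : ℝ) : ℂ) * (((Real.sqrt 2 / 2 : ℝ) : ℂ) + F2 x t / ((H2 x t : ℝ) : ℂ))
      * Complex.exp (2 * Complex.I * (t : ℂ))‖ ^ 2 = 2 * NRM x t := by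
    rw [norm_mul, _root_.norm_exp, mul_one, norm_mul, mul_pow, hn, norm_f]
  rw [← Complex.ofReal_pow, h]
  push_cast
  ring

theorem key (x t : ℝ) :
    Complex.I * (12 * Complex.I * ((Real.sqrt 2 : ℝ) : ℂ) * (((pAt x t : ℝ) : ℂ) + Complex.I * ((pBt x t : ℝ) : ℂ)) * ((H2 x t : ℝ) : ℂ) - 12 * Complex.I * ((Real.sqrt 2 : ℝ) : ℂ) * (((pA x t : ℝ) : ℂ) + Complex.I * ((pB x t : ℝ) : ℂ)) * ((pHt x t : ℝ) : ℂ)) * ((H2 x t : ℝ) : ℂ) * ((H2 x t : ℝ) : ℂ) + ((12 * Complex.I * ((Real.sqrt 2 : ℝ) : ℂ) * (((pAxx x t : ℝ) : ℂ) + Complex.I * ((pBxx x t : ℝ) : ℂ)) * ((H2 x t : ℝ) : ℂ) + 12 * Complex.I * ((Real.sqrt 2 : ℝ) : ℂ) * (((pAx x t : ℝ) : ℂ) + Complex.I * ((pBx x t : ℝ) : ℂ)) * ((pHx x t : ℝ) : ℂ) - (12 * Complex.I * ((Real.sqrt 2 : ℝ) : ℂ) * (((pAx x t : ℝ) : ℂ)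 + Complex.I * ((pBx x t : ℝ) : ℂ)) * ((pHx x t : ℝ) : ℂ) + 12 * Complex.I * ((Real.sqrt 2 : ℝ) : ℂ) * (((pA x t : ℝ) : ℂ) + Complex.I * ((pB x t : ℝ) : ℂ)) * ((pHxx x t : ℝ) : ℂ))) * ((H2 x t : ℝ) : ℂ) ^ 2 - (12 * Complex.I * ((Real.sqrt 2 : ℝ) : ℂ) * (((pAx x t : ℝ) : ℂ) + Complex.I * ((pBx x t : ℝ) : ℂ)) * ((H2 x t : ℝ) : ℂ) - 12 * Complex.I * ((Real.sqrt 2 : ℝ) : ℂ) * (((pA x t : ℝ) : ℂ) + Complex.I * ((pB x t : ℝ) : ℂ)) * ((pHx x t : ℝ) : ℂ)) * (2 * ((H2 x t : ℝ) : ℂ) * ((pHx x t : ℝ) : ℂ))) + (-2 * ((H2 x t : ℝ) : ℂ) ^ 2 + 4 * (((H2 x t : ℝ) : ℂ) ^ 2 / 2 - 24 * ((pB x t : ℝ) : ℂ) * ((H2 x t : ℝ) : ℂ) + 288 * (((pA x t : ℝ) : ℂ) ^ 2 + ((pB x t : ℝ) : ℂ) ^ 2))) * ((((Real.sqrt 2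 : ℝ) : ℂ) / 2) * ((H2 x t : ℝ) : ℂ) + 12 * Complex.I * ((Real.sqrt 2 : ℝ) : ℂ) * (((pA x t : ℝ) : ℂ) + Complex.I * ((pB x t : ℝ) : ℂ))) * ((H2 x t : ℝ) : ℂ) = 0 := by
  unfold pA pB pAt pBt pAx pBx pAxx pBxx pHx pHxx pHt H2
  push_cast
  linear_combination (-393216 * (x:ℂ) ^ 22 * (Real.sqrt 2 : ℂ) + 4325376 * (x:ℂ) ^ 21 * (Real.sqrt 2 : ℂ) - 14155776 * (x:ℂ) ^ 20 * (t:ℂ) ^ 2 * (Real.sqrt 2 : ℂ) + 2359296 * (x:ℂ) ^ 20 * (t:ℂ) * (Real.sqrt 2 : ℂ) * Complex.I - 23592960 * (x:ℂ) ^ 20 * (Real.sqrt 2 : ℂ) + 141557760 * (x:ℂ) ^ 19 * (t:ℂ) ^ 2 * (Real.sqrt 2 : ℂ) - 23592960 * (x:ℂ) ^ 19 * (t:ℂ) * (Real.sqrt 2 : ℂ) * Complex.I + 84934656 * (x:ℂ) ^ 19 * (Real.sqrt 2 : ℂ) - 220200960 * (x:ℂ) ^ 18 * (t:ℂ) ^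 4 * (Real.sqrt 2 : ℂ) + 69206016 * (x:ℂ) ^ 18 * (t:ℂ) ^ 3 * (Real.sqrt 2 : ℂ) * Complex.I - 693633024 * (x:ℂ) ^ 18 * (t:ℂ) ^ 2 * (Real.sqrt 2 : ℂ) + 122683392 * (x:ℂ) ^ 18 * (t:ℂ) * (Real.sqrt 2 : ℂ) * Complex.I - 226787328 * (x:ℂ) ^ 18 * (Real.sqrt 2 : ℂ) + 1981808640 * (x:ℂ) ^ 17 * (t:ℂ) ^ 4 * (Real.sqrt 2 : ℂ) - 622854144 * (x:ℂ) ^ 17 * (t:ℂ) ^ 3 * (Real.sqrt 2 : ℂ) * Complex.I + 2222456832 * (x:ℂ) ^ 17 * (t:ℂ) ^ 2 * (Real.sqrt 2 : ℂ) - 438829056 * (x:ℂ) ^ 17 * (t:ℂ) * (Real.sqrt 2 : ℂ) * Complex.I + 478642176 * (x:ℂ) ^ 17 * (Real.sqrt 2 : ℂ) - 1887436800 * (x:ℂ) ^ 16 * (t:ℂ) ^ 6 * (Real.sqrt 2 : ℂ) + 792723456 * (x:ℂ) ^ 16 * (t:ℂ) ^ 5 * (Real.sqrt 2 : ℂ)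 * Complex.I - 8474591232 * (x:ℂ) ^ 16 * (t:ℂ) ^ 4 * (Real.sqrt 2 : ℂ) + 2746220544 * (x:ℂ) ^ 16 * (t:ℂ) ^ 3 * (Real.sqrt 2 : ℂ) * Complex.I - 5212864512 * (x:ℂ) ^ 16 * (t:ℂ) ^ 2 * (Real.sqrt 2 : ℂ) + 1212088320 * (x:ℂ) ^ 16 * (t:ℂ) * (Real.sqrt 2 : ℂ) * Complex.I - 830545920 * (x:ℂ) ^ 16 * (Real.sqrt 2 : ℂ) + 15099494400 * (x:ℂ) ^ 15 * (t:ℂ) ^ 6 * (Real.sqrt 2 : ℂ) - 6341787648 * (x:ℂ) ^ 15 * (t:ℂ) ^ 5 * (Real.sqrt 2 : ℂ) * Complex.I + 23102226432 * (x:ℂ) ^ 15 * (t:ℂ) ^ 4 * (Real.sqrt 2 : ℂ) - 8002732032 * (x:ℂ) ^ 15 * (t:ℂ) ^ 3 * (Real.sqrt 2 : ℂ) * Complex.I + 9484369920 * (x:ℂ) ^ 15 * (t:ℂ) ^ 2 * (Real.sqrt 2 : ℂ) - 2732064768 * (x:ℂ) ^ 15 * (t:ℂ) * (Real.sqrt 2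 : ℂ) * Complex.I + 1215627264 * (x:ℂ) ^ 15 * (Real.sqrt 2 : ℂ) - 9059696640 * (x:ℂ) ^ 14 * (t:ℂ) ^ 8 * (Real.sqrt 2 : ℂ) + 3623878656 * (x:ℂ) ^ 14 * (t:ℂ) ^ 7 * (Real.sqrt 2 : ℂ) * Complex.I - 52848230400 * (x:ℂ) ^ 14 * (t:ℂ) ^ 6 * (Real.sqrt 2 : ℂ) + 22649241600 * (x:ℂ) ^ 14 * (t:ℂ) ^ 5 * (Real.sqrt 2 : ℂ) * Complex.I - 43996151808 * (x:ℂ) ^ 14 * (t:ℂ) ^ 4 * (Real.sqrt 2 : ℂ) + 17609785344 * (x:ℂ) ^ 14 * (t:ℂ) ^ 3 * (Real.sqrt 2 : ℂ) * Complex.I - 13865582592 * (x:ℂ) ^ 14 * (t:ℂ) ^ 2 * (Real.sqrt 2 : ℂ) + 5165088768 * (x:ℂ) ^ 14 * (t:ℂ) * (Real.sqrt 2 : ℂ) * Complex.I - 1524842496 * (x:ℂ) ^ 14 * (Real.sqrt 2 : ℂ) + 63417876480 * (x:ℂ) ^ 13 * (t:ℂ) ^ 8 * (Real.sqrt 2 :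 ℂ) - 25367150592 * (x:ℂ) ^ 13 * (t:ℂ) ^ 7 * (Real.sqrt 2 : ℂ) * Complex.I + 107810390016 * (x:ℂ) ^ 13 * (t:ℂ) ^ 6 * (Real.sqrt 2 : ℂ) - 48922361856 * (x:ℂ) ^ 13 * (t:ℂ) ^ 5 * (Real.sqrt 2 : ℂ) * Complex.I + 58604912640 * (x:ℂ) ^ 13 * (t:ℂ) ^ 4 * (Real.sqrt 2 : ℂ) - 31142707200 * (x:ℂ) ^ 13 * (t:ℂ) ^ 3 * (Real.sqrt 2 : ℂ) * Complex.I + 16668426240 * (x:ℂ) ^ 13 * (t:ℂ) ^ 2 * (Real.sqrt 2 : ℂ) - 8318287872 * (x:ℂ) ^ 13 * (t:ℂ) * (Real.sqrt 2 : ℂ) * Complex.I + 1653903360 * (x:ℂ) ^ 13 * (Real.sqrt 2 : ℂ) - 16911433728 * (x:ℂ) ^ 12 * (t:ℂ) ^ 10 * (Real.sqrt 2 : ℂ) - 8455716864 * (x:ℂ) ^ 12 * (t:ℂ) ^ 9 * (Real.sqrt 2 : ℂ) * Complex.I - 143747186688 * (x:ℂ) ^ 12 * (t:ℂ) ^ 8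 * (Real.sqrt 2 : ℂ) + 56170119168 * (x:ℂ) ^ 12 * (t:ℂ) ^ 7 * (Real.sqrt 2 : ℂ) * Complex.I - 131139108864 * (x:ℂ) ^ 12 * (t:ℂ) ^ 6 * (Real.sqrt 2 : ℂ) + 77573652480 * (x:ℂ) ^ 12 * (t:ℂ) ^ 5 * (Real.sqrt 2 : ℂ) * Complex.I - 49446125568 * (x:ℂ) ^ 12 * (t:ℂ) ^ 4 * (Real.sqrt 2 : ℂ) + 44972900352 * (x:ℂ) ^ 12 * (t:ℂ) ^ 3 * (Real.sqrt 2 : ℂ) * Complex.I - 16509173760 * (x:ℂ) ^ 12 * (t:ℂ) ^ 2 * (Real.sqrt 2 : ℂ) + 11547131904 * (x:ℂ) ^ 12 * (t:ℂ) * (Real.sqrt 2 : ℂ) * Complex.I - 1558517760 * (x:ℂ) ^ 12 * (Real.sqrt 2 : ℂ) + 101468602368 * (x:ℂ) ^ 11 * (t:ℂ) ^ 10 * (Real.sqrt 2 : ℂ) + 50734301184 * (x:ℂ) ^ 11 * (t:ℂ) ^ 9 * (Real.sqrt 2 : ℂ) * Complex.I + 50734301184 * (x:ℂ) ^ 11 *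 (t:ℂ) ^ 8 * (Real.sqrt 2 : ℂ) - 14495514624 * (x:ℂ) ^ 11 * (t:ℂ) ^ 7 * (Real.sqrt 2 : ℂ) * Complex.I + 54811164672 * (x:ℂ) ^ 11 * (t:ℂ) ^ 6 * (Real.sqrt 2 : ℂ) - 106677927936 * (x:ℂ) ^ 11 * (t:ℂ) ^ 5 * (Real.sqrt 2 : ℂ) * Complex.I + 12995002368 * (x:ℂ) ^ 11 * (t:ℂ) ^ 4 * (Real.sqrt 2 : ℂ) - 52914290688 * (x:ℂ) ^ 11 * (t:ℂ) ^ 3 * (Real.sqrt 2 : ℂ) * Complex.I + 12923338752 * (x:ℂ) ^ 11 * (t:ℂ) ^ 2 * (Real.sqrt 2 : ℂ) - 13930610688 * (x:ℂ) ^ 11 * (t:ℂ) * (Real.sqrt 2 : ℂ) * Complex.I + 1279991808 * (x:ℂ) ^ 11 * (Real.sqrt 2 : ℂ) + 67645734912 * (x:ℂ) ^ 10 * (t:ℂ) ^ 12 * (Real.sqrt 2 : ℂ) - 202937204736 * (x:ℂ) ^ 10 * (t:ℂ) ^ 11 * (Real.sqrt 2 : ℂ) * Complex.I + 219848638464 *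 (x:ℂ) ^ 10 * (t:ℂ) ^ 10 * (Real.sqrt 2 : ℂ) - 376883380224 * (x:ℂ) ^ 10 * (t:ℂ) ^ 9 * (Real.sqrt 2 : ℂ) * Complex.I + 427164696576 * (x:ℂ) ^ 10 * (t:ℂ) ^ 8 * (Real.sqrt 2 : ℂ) - 116870086656 * (x:ℂ) ^ 10 * (t:ℂ) ^ 7 * (Real.sqrt 2 : ℂ) * Complex.I + 132611309568 * (x:ℂ) ^ 10 * (t:ℂ) ^ 6 * (Real.sqrt 2 : ℂ) + 132752867328 * (x:ℂ) ^ 10 * (t:ℂ) ^ 5 * (Real.sqrt 2 : ℂ) * Complex.I + 36033527808 * (x:ℂ) ^ 10 * (t:ℂ) ^ 4 * (Real.sqrt 2 : ℂ) + 51332382720 * (x:ℂ) ^ 10 * (t:ℂ) ^ 3 * (Real.sqrt 2 : ℂ) * Complex.I - 6796099584 * (x:ℂ) ^ 10 * (t:ℂ) ^ 2 * (Real.sqrt 2 : ℂ) + 14649237504 * (x:ℂ) ^ 10 * (t:ℂ) * (Real.sqrt 2 : ℂ) * Complex.I - 919060992 * (x:ℂ) ^ 10 * (Real.sqrt 2 :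 ℂ) - 338228674560 * (x:ℂ) ^ 9 * (t:ℂ) ^ 12 * (Real.sqrt 2 : ℂ) + 1014686023680 * (x:ℂ) ^ 9 * (t:ℂ) ^ 11 * (Real.sqrt 2 : ℂ) * Complex.I - 1978637746176 * (x:ℂ) ^ 9 * (t:ℂ) ^ 10 * (Real.sqrt 2 : ℂ) + 1389153484800 * (x:ℂ) ^ 9 * (t:ℂ) ^ 9 * (Real.sqrt 2 : ℂ) * Complex.I - 1127479246848 * (x:ℂ) ^ 9 * (t:ℂ) ^ 8 * (Real.sqrt 2 : ℂ) + 137707388928 * (x:ℂ) ^ 9 * (t:ℂ) ^ 7 * (Real.sqrt 2 : ℂ) * Complex.I - 305425022976 * (x:ℂ) ^ 9 * (t:ℂ) ^ 6 * (Real.sqrt 2 : ℂ) - 144983457792 * (x:ℂ) ^ 9 * (t:ℂ) ^ 5 * (Real.sqrt 2 : ℂ) * Complex.I - 80119922688 * (x:ℂ) ^ 9 * (t:ℂ) ^ 4 * (Real.sqrt 2 : ℂ) - 42493870080 * (x:ℂ) ^ 9 * (t:ℂ) ^ 3 * (Real.sqrt 2 : ℂ) * Complex.I + 211009536 * (x:ℂ)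 ^ 9 * (t:ℂ) ^ 2 * (Real.sqrt 2 : ℂ) - 13405077504 * (x:ℂ) ^ 9 * (t:ℂ) * (Real.sqrt 2 : ℂ) * Complex.I + 580400640 * (x:ℂ) ^ 9 * (Real.sqrt 2 : ℂ) + 579820584960 * (x:ℂ) ^ 8 * (t:ℂ) ^ 14 * (Real.sqrt 2 : ℂ) - 1217623228416 * (x:ℂ) ^ 8 * (t:ℂ) ^ 13 * (Real.sqrt 2 : ℂ) * Complex.I + 3179349540864 * (x:ℂ) ^ 8 * (t:ℂ) ^ 12 * (Real.sqrt 2 : ℂ) - 3667365199872 * (x:ℂ) ^ 8 * (t:ℂ) ^ 11 * (Real.sqrt 2 : ℂ) * Complex.I + 5270931505152 * (x:ℂ) ^ 8 * (t:ℂ) ^ 10 * (Real.sqrt 2 : ℂ) - 2707943325696 * (x:ℂ) ^ 8 * (t:ℂ) ^ 9 * (Real.sqrt 2 : ℂ) * Complex.I + 1964028985344 * (x:ℂ) ^ 8 * (t:ℂ) ^ 8 * (Real.sqrt 2 : ℂ) - 12230590464 * (x:ℂ) ^ 8 * (t:ℂ) ^ 7 * (Real.sqrt 2 : ℂ) * Complex.I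 + 357405032448 * (x:ℂ) ^ 8 * (t:ℂ) ^ 6 * (Real.sqrt 2 : ℂ) + 154729709568 * (x:ℂ) ^ 8 * (t:ℂ) ^ 5 * (Real.sqrt 2 : ℂ) * Complex.I + 103904280576 * (x:ℂ) ^ 8 * (t:ℂ) ^ 4 * (Real.sqrt 2 : ℂ) + 31062196224 * (x:ℂ) ^ 8 * (t:ℂ) ^ 3 * (Real.sqrt 2 : ℂ) * Complex.I + 4779067392 * (x:ℂ) ^ 8 * (t:ℂ) ^ 2 * (Real.sqrt 2 : ℂ) + 10633835520 * (x:ℂ) ^ 8 * (t:ℂ) * (Real.sqrt 2 : ℂ) * Complex.I - 327338496 * (x:ℂ) ^ 8 * (Real.sqrt 2 : ℂ) - 2319282339840 * (x:ℂ) ^ 7 * (t:ℂ) ^ 14 * (Real.sqrt 2 : ℂ) + 4870492913664 * (x:ℂ) ^ 7 * (t:ℂ) ^ 13 * (Real.sqrt 2 : ℂ) * Complex.I - 10552734646272 * (x:ℂ) ^ 7 * (t:ℂ) ^ 12 * (Real.sqrt 2 : ℂ) + 8465380540416 * (x:ℂ) ^ 7 * (t:ℂ) ^ 11 * (Real.sqrt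 2 : ℂ) * Complex.I - 7936294256640 * (x:ℂ) ^ 7 * (t:ℂ) ^ 10 * (Real.sqrt 2 : ℂ) + 2960708861952 * (x:ℂ) ^ 7 * (t:ℂ) ^ 9 * (Real.sqrt 2 : ℂ) * Complex.I - 3045417025536 * (x:ℂ) ^ 7 * (t:ℂ) ^ 8 * (Real.sqrt 2 : ℂ) + 32614907904 * (x:ℂ) ^ 7 * (t:ℂ) ^ 7 * (Real.sqrt 2 : ℂ) * Complex.I - 384669057024 * (x:ℂ) ^ 7 * (t:ℂ) ^ 6 * (Real.sqrt 2 : ℂ) - 175177728000 * (x:ℂ) ^ 7 * (t:ℂ) ^ 5 * (Real.sqrt 2 : ℂ) * Complex.I - 96061095936 * (x:ℂ) ^ 7 * (t:ℂ) ^ 4 * (Real.sqrt 2 : ℂ) - 20798373888 * (x:ℂ) ^ 7 * (t:ℂ) ^ 3 * (Real.sqrt 2 : ℂ) * Complex.I - 7088726016 * (x:ℂ) ^ 7 * (t:ℂ) ^ 2 * (Real.sqrt 2 : ℂ) - 7258927104 * (x:ℂ) ^ 7 * (t:ℂ) * (Real.sqrt 2 : ℂ) * Complex.I + 170201088 * (x:ℂ)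 ^ 7 * (Real.sqrt 2 : ℂ) + 1932735283200 * (x:ℂ) ^ 6 * (t:ℂ) ^ 16 * (Real.sqrt 2 : ℂ) - 4020089389056 * (x:ℂ) ^ 6 * (t:ℂ) ^ 15 * (Real.sqrt 2 : ℂ) * Complex.I + 11519102287872 * (x:ℂ) ^ 6 * (t:ℂ) ^ 14 * (Real.sqrt 2 : ℂ) - 14147622273024 * (x:ℂ) ^ 6 * (t:ℂ) ^ 13 * (Real.sqrt 2 : ℂ) * Complex.I + 21438866128896 * (x:ℂ) ^ 6 * (t:ℂ) ^ 12 * (Real.sqrt 2 : ℂ) - 13611288231936 * (x:ℂ) ^ 6 * (t:ℂ) ^ 11 * (Real.sqrt 2 : ℂ) * Complex.I + 9260821905408 * (x:ℂ) ^ 6 * (t:ℂ) ^ 10 * (Real.sqrt 2 : ℂ) - 2583372496896 * (x:ℂ) ^ 6 * (t:ℂ) ^ 9 * (Real.sqrt 2 : ℂ) * Complex.I + 3793181736960 * (x:ℂ) ^ 6 * (t:ℂ) ^ 8 * (Real.sqrt 2 : ℂ) - 181760163840 * (x:ℂ) ^ 6 * (t:ℂ) ^ 7 * (Real.sqrt 2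 : ℂ) * Complex.I + 473638109184 * (x:ℂ) ^ 6 * (t:ℂ) ^ 6 * (Real.sqrt 2 : ℂ) + 165813682176 * (x:ℂ) ^ 6 * (t:ℂ) ^ 5 * (Real.sqrt 2 : ℂ) * Complex.I + 67734061056 * (x:ℂ) ^ 6 * (t:ℂ) ^ 4 * (Real.sqrt 2 : ℂ) + 14583545856 * (x:ℂ) ^ 6 * (t:ℂ) ^ 3 * (Real.sqrt 2 : ℂ) * Complex.I + 6793113600 * (x:ℂ) ^ 6 * (t:ℂ) ^ 2 * (Real.sqrt 2 : ℂ) + 4198293504 * (x:ℂ) ^ 6 * (t:ℂ) * (Real.sqrt 2 : ℂ) * Complex.I - 84913920 * (x:ℂ) ^ 6 * (Real.sqrt 2 : ℂ) - 5798205849600 * (x:ℂ) ^ 5 * (t:ℂ) ^ 16 * (Real.sqrt 2 : ℂ) + 12060268167168 * (x:ℂ) ^ 5 * (t:ℂ) ^ 15 * (Real.sqrt 2 : ℂ) * Complex.I - 26207890440192 * (x:ℂ) ^ 5 * (t:ℂ) ^ 14 * (Real.sqrt 2 : ℂ) + 25048249270272 * (x:ℂ) ^ 5 * (t:ℂ)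 ^ 13 * (Real.sqrt 2 : ℂ) * Complex.I - 27903865651200 * (x:ℂ) ^ 5 * (t:ℂ) ^ 12 * (Real.sqrt 2 : ℂ) + 14872398004224 * (x:ℂ) ^ 5 * (t:ℂ) ^ 11 * (Real.sqrt 2 : ℂ) * Complex.I - 9637705285632 * (x:ℂ) ^ 5 * (t:ℂ) ^ 10 * (Real.sqrt 2 : ℂ) + 3124236386304 * (x:ℂ) ^ 5 * (t:ℂ) ^ 9 * (Real.sqrt 2 : ℂ) * Complex.I - 3280601088000 * (x:ℂ) ^ 5 * (t:ℂ) ^ 8 * (Real.sqrt 2 : ℂ) + 155430420480 * (x:ℂ) ^ 5 * (t:ℂ) ^ 7 * (Real.sqrt 2 : ℂ) * Complex.I - 485274157056 * (x:ℂ) ^ 5 * (t:ℂ) ^ 6 * (Real.sqrt 2 : ℂ) - 102431195136 * (x:ℂ) ^ 5 * (t:ℂ) ^ 5 * (Real.sqrt 2 : ℂ) * Complex.I - 40406335488 * (x:ℂ) ^ 5 * (t:ℂ) ^ 4 * (Real.sqrt 2 : ℂ) - 11478122496 * (x:ℂ) ^ 5 * (t:ℂ) ^ 3 * (Real.sqrt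 2 : ℂ) * Complex.I - 4846252032 * (x:ℂ) ^ 5 * (t:ℂ) ^ 2 * (Real.sqrt 2 : ℂ) - 2011060224 * (x:ℂ) ^ 5 * (t:ℂ) * (Real.sqrt 2 : ℂ) * Complex.I + 40310784 * (x:ℂ) ^ 5 * (Real.sqrt 2 : ℂ) + 3607772528640 * (x:ℂ) ^ 4 * (t:ℂ) ^ 18 * (Real.sqrt 2 : ℂ) - 7885559955456 * (x:ℂ) ^ 4 * (t:ℂ) ^ 17 * (Real.sqrt 2 : ℂ) * Complex.I + 21646635171840 * (x:ℂ) ^ 4 * (t:ℂ) ^ 16 * (Real.sqrt 2 : ℂ) - 30150670417920 * (x:ℂ) ^ 4 * (t:ℂ) ^ 15 * (Real.sqrt 2 : ℂ) * Complex.I + 46211700621312 * (x:ℂ) ^ 4 * (t:ℂ) ^ 14 * (Real.sqrt 2 : ℂ) - 36383741706240 * (x:ℂ) ^ 4 * (t:ℂ) ^ 13 * (Real.sqrt 2 : ℂ) * Complex.I + 27813268684800 * (x:ℂ) ^ 4 * (t:ℂ) ^ 12 * (Real.sqrt 2 : ℂ) - 10317182533632 * (x:ℂ) ^ 4 * (t:ℂ)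 ^ 11 * (Real.sqrt 2 : ℂ) * Complex.I + 9102277214208 * (x:ℂ) ^ 4 * (t:ℂ) ^ 10 * (Real.sqrt 2 : ℂ) - 3295804391424 * (x:ℂ) ^ 4 * (t:ℂ) ^ 9 * (Real.sqrt 2 : ℂ) * Complex.I + 2162903482368 * (x:ℂ) ^ 4 * (t:ℂ) ^ 8 * (Real.sqrt 2 : ℂ) - 32360103936 * (x:ℂ) ^ 4 * (t:ℂ) ^ 7 * (Real.sqrt 2 : ℂ) * Complex.I + 380406398976 * (x:ℂ) ^ 4 * (t:ℂ) ^ 6 * (Real.sqrt 2 : ℂ) + 42209869824 * (x:ℂ) ^ 4 * (t:ℂ) ^ 5 * (Real.sqrt 2 : ℂ) * Complex.I + 24007311360 * (x:ℂ) ^ 4 * (t:ℂ) ^ 4 * (Real.sqrt 2 : ℂ) + 7984521216 * (x:ℂ) ^ 4 * (t:ℂ) ^ 3 * (Real.sqrt 2 : ℂ) * Complex.I + 2577650688 * (x:ℂ) ^ 4 * (t:ℂ) ^ 2 * (Real.sqrt 2 : ℂ) + 780461568 * (x:ℂ) ^ 4 * (t:ℂ) * (Real.sqrt 2 : ℂ)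 * Complex.I - 16586208 * (x:ℂ) ^ 4 * (Real.sqrt 2 : ℂ) - 7215545057280 * (x:ℂ) ^ 3 * (t:ℂ) ^ 18 * (Real.sqrt 2 : ℂ) + 15771119910912 * (x:ℂ) ^ 3 * (t:ℂ) ^ 17 * (Real.sqrt 2 : ℂ) * Complex.I - 33397665693696 * (x:ℂ) ^ 3 * (t:ℂ) ^ 16 * (Real.sqrt 2 : ℂ) + 39582418599936 * (x:ℂ) ^ 3 * (t:ℂ) ^ 15 * (Real.sqrt 2 : ℂ) * Complex.I - 50212462657536 * (x:ℂ) ^ 3 * (t:ℂ) ^ 14 * (Real.sqrt 2 : ℂ) + 35658965975040 * (x:ℂ) ^ 3 * (t:ℂ) ^ 13 * (Real.sqrt 2 : ℂ) * Complex.I - 19416741838848 * (x:ℂ) ^ 3 * (t:ℂ) ^ 12 * (Real.sqrt 2 : ℂ) + 2239557009408 * (x:ℂ) ^ 3 * (t:ℂ) ^ 11 * (Real.sqrt 2 : ℂ) * Complex.I - 5840106946560 * (x:ℂ) ^ 3 * (t:ℂ) ^ 10 * (Real.sqrt 2 : ℂ) + 1438793072640 * (x:ℂ) ^ 3 * (t:ℂ)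 ^ 9 * (Real.sqrt 2 : ℂ) * Complex.I - 1100243533824 * (x:ℂ) ^ 3 * (t:ℂ) ^ 8 * (Real.sqrt 2 : ℂ) - 34143731712 * (x:ℂ) ^ 3 * (t:ℂ) ^ 7 * (Real.sqrt 2 : ℂ) * Complex.I - 223494930432 * (x:ℂ) ^ 3 * (t:ℂ) ^ 6 * (Real.sqrt 2 : ℂ) - 21069103104 * (x:ℂ) ^ 3 * (t:ℂ) ^ 5 * (Real.sqrt 2 : ℂ) * Complex.I - 14261059584 * (x:ℂ) ^ 3 * (t:ℂ) ^ 4 * (Real.sqrt 2 : ℂ) - 4001218560 * (x:ℂ) ^ 3 * (t:ℂ) ^ 3 * (Real.sqrt 2 : ℂ) * Complex.I - 994332672 * (x:ℂ) ^ 3 * (t:ℂ) ^ 2 * (Real.sqrt 2 : ℂ) - 239625216 * (x:ℂ) ^ 3 * (t:ℂ) * (Real.sqrt 2 : ℂ) * Complex.I + 5178816 * (x:ℂ) ^ 3 * (Real.sqrt 2 : ℂ) + 3710851743744 * (x:ℂ) ^ 2 * (t:ℂ) ^ 20 * (Real.sqrt 2 : ℂ) - 8658654068736 * (x:ℂ)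 ^ 2 * (t:ℂ) ^ 19 * (Real.sqrt 2 : ℂ) * Complex.I + 21337397526528 * (x:ℂ) ^ 2 * (t:ℂ) ^ 18 * (Real.sqrt 2 : ℂ) - 35253091565568 * (x:ℂ) ^ 2 * (t:ℂ) ^ 17 * (Real.sqrt 2 : ℂ) * Complex.I + 49458695897088 * (x:ℂ) ^ 2 * (t:ℂ) ^ 16 * (Real.sqrt 2 : ℂ) - 50792283242496 * (x:ℂ) ^ 2 * (t:ℂ) ^ 15 * (Real.sqrt 2 : ℂ) * Complex.I + 51401094856704 * (x:ℂ) ^ 2 * (t:ℂ) ^ 14 * (Real.sqrt 2 : ℂ) - 36767872843776 * (x:ℂ) ^ 2 * (t:ℂ) ^ 13 * (Real.sqrt 2 : ℂ) * Complex.I + 18258912608256 * (x:ℂ) ^ 2 * (t:ℂ) ^ 12 * (Real.sqrt 2 : ℂ) - 3579486142464 * (x:ℂ) ^ 2 * (t:ℂ) ^ 11 * (Real.sqrt 2 : ℂ) * Complex.I + 4473338462208 * (x:ℂ) ^ 2 * (t:ℂ) ^ 10 * (Real.sqrt 2 : ℂ) - 557001474048 * (x:ℂ) ^ 2 * (t:ℂ)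 ^ 9 * (Real.sqrt 2 : ℂ) * Complex.I + 620224708608 * (x:ℂ) ^ 2 * (t:ℂ) ^ 8 * (Real.sqrt 2 : ℂ) + 5541986304 * (x:ℂ) ^ 2 * (t:ℂ) ^ 7 * (Real.sqrt 2 : ℂ) * Complex.I + 94834851840 * (x:ℂ) ^ 2 * (t:ℂ) ^ 6 * (Real.sqrt 2 : ℂ) + 12182814720 * (x:ℂ) ^ 2 * (t:ℂ) ^ 5 * (Real.sqrt 2 : ℂ) * Complex.I + 6727421952 * (x:ℂ) ^ 2 * (t:ℂ) ^ 4 * (Real.sqrt 2 : ℂ) + 1460146176 * (x:ℂ) ^ 2 * (t:ℂ) ^ 3 * (Real.sqrt 2 : ℂ) * Complex.I + 270418176 * (x:ℂ) ^ 2 * (t:ℂ) ^ 2 * (Real.sqrt 2 : ℂ) + 56267136 * (x:ℂ) ^ 2 * (t:ℂ) * (Real.sqrt 2 : ℂ) * Complex.I - 1049760 * (x:ℂ) ^ 2 * (Real.sqrt 2 : ℂ) - 3710851743744 * (x:ℂ) * (t:ℂ) ^ 20 * (Real.sqrt 2 : ℂ) + 8658654068736 * (x:ℂ) * (t:ℂ)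 ^ 19 * (Real.sqrt 2 : ℂ) * Complex.I - 17626545782784 * (x:ℂ) * (t:ℂ) ^ 18 * (Real.sqrt 2 : ℂ) + 26903675142144 * (x:ℂ) * (t:ℂ) ^ 17 * (Real.sqrt 2 : ℂ) * Complex.I - 33571611869184 * (x:ℂ) * (t:ℂ) ^ 16 * (Real.sqrt 2 : ℂ) + 32469952757760 * (x:ℂ) * (t:ℂ) ^ 15 * (Real.sqrt 2 : ℂ) * Complex.I - 30701499973632 * (x:ℂ) * (t:ℂ) ^ 14 * (Real.sqrt 2 : ℂ) + 22591259541504 * (x:ℂ) * (t:ℂ) ^ 13 * (Real.sqrt 2 : ℂ) * Complex.I - 12354255323136 * (x:ℂ) * (t:ℂ) ^ 12 * (Real.sqrt 2 : ℂ) + 4325552160768 * (x:ℂ) * (t:ℂ) ^ 11 * (Real.sqrt 2 : ℂ) * Complex.I - 2995475447808 * (x:ℂ) * (t:ℂ) ^ 10 * (Real.sqrt 2 : ℂ) + 439282040832 * (x:ℂ) * (t:ℂ) ^ 9 * (Real.sqrt 2 : ℂ) * Complex.I - 366631059456 * (x:ℂ) * (t:ℂ) ^ 8 * (Real.sqrt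 2 : ℂ) + 13950517248 * (x:ℂ) * (t:ℂ) ^ 7 * (Real.sqrt 2 : ℂ) * Complex.I - 29955391488 * (x:ℂ) * (t:ℂ) ^ 6 * (Real.sqrt 2 : ℂ) - 3511517184 * (x:ℂ) * (t:ℂ) ^ 5 * (Real.sqrt 2 : ℂ) * Complex.I - 1988665344 * (x:ℂ) * (t:ℂ) ^ 4 * (Real.sqrt 2 : ℂ) - 367276032 * (x:ℂ) * (t:ℂ) ^ 3 * (Real.sqrt 2 : ℂ) * Complex.I - 48708864 * (x:ℂ) * (t:ℂ) ^ 2 * (Real.sqrt 2 : ℂ) - 9237888 * (x:ℂ) * (t:ℂ) * (Real.sqrt 2 : ℂ) * Complex.I + 104976 * (x:ℂ) * (Real.sqrt 2 : ℂ) + 1649267441664 * (t:ℂ) ^ 22 * (Real.sqrt 2 : ℂ) - 4123168604160 * (t:ℂ) ^ 21 * (Real.sqrt 2 : ℂ) * Complex.I + 8658654068736 * (t:ℂ) ^ 20 * (Real.sqrt 2 : ℂ) - 17935783428096 * (t:ℂ) ^ 19 * (Real.sqrt 2 : ℂ) * Complex.I + 17085379903488 * (t:ℂ) ^ 18 * (Real.sqrt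 2 : ℂ) - 27251567493120 * (t:ℂ) ^ 17 * (Real.sqrt 2 : ℂ) * Complex.I + 16075525718016 * (t:ℂ) ^ 16 * (Real.sqrt 2 : ℂ) - 18786186952704 * (t:ℂ) ^ 15 * (Real.sqrt 2 : ℂ) * Complex.I + 7914550984704 * (t:ℂ) ^ 14 * (Real.sqrt 2 : ℂ) - 7561222815744 * (t:ℂ) ^ 13 * (Real.sqrt 2 : ℂ) * Complex.I + 2340799119360 * (t:ℂ) ^ 12 * (Real.sqrt 2 : ℂ) - 1204713160704 * (t:ℂ) ^ 11 * (Real.sqrt 2 : ℂ) * Complex.I + 570633486336 * (t:ℂ) ^ 10 * (Real.sqrt 2 : ℂ) - 20448018432 * (t:ℂ) ^ 9 * (Real.sqrt 2 : ℂ) * Complex.I + 93353803776 * (t:ℂ) ^ 8 * (Real.sqrt 2 : ℂ) + 13854965760 * (t:ℂ) ^ 7 * (Real.sqrt 2 : ℂ) * Complex.I + 8181596160 * (t:ℂ) ^ 6 * (Real.sqrt 2 : ℂ) + 1487020032 * (t:ℂ) ^ 5 * (Real.sqrt 2 : ℂ) * Complex.I + 334803456 * (t:ℂ) ^ 4 *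 (Real.sqrt 2 : ℂ) + 59346432 * (t:ℂ) ^ 3 * (Real.sqrt 2 : ℂ) * Complex.I + 5038848 * (t:ℂ) ^ 2 * (Real.sqrt 2 : ℂ) + 839808 * (t:ℂ) * (Real.sqrt 2 : ℂ) * Complex.I) * Complex.I_sq

theorem core (x t : ℝ) :
    Complex.I * DT x t + D2 x t
      + (-2 + 4 * ((NRM x t : ℝ) : ℂ))
        * (((Real.sqrt 2 / 2 : ℝ) : ℂ) + F2 x t / ((H2 x t : ℝ) : ℂ)) = 0 := by
  have hH : ((H2 x t : ℝ) : ℂ) ≠ 0 := hH2ne x t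
  have hnrm : ((NRM x t : ℝ) : ℂ) = 1/2 - 24 * ((pB x t : ℝ) : ℂ) / ((H2 x t : ℝ) : ℂ)
      + 288 * (((pA x t : ℝ) : ℂ) ^ 2 + ((pB x t : ℝ) : ℂ) ^ 2) / ((H2 x t : ℝ) : ℂ) ^ 2 := by
    unfold NRM
    push_cast
    ring
  have hc : ((Real.sqrt 2 / 2 : ℝ) : ℂ) = ((Real.sqrt 2 : ℝ) : ℂ) / 2 := by
    push_cast
    ring
  rw [hnrm, hc]
  unfold DT D2
  simp only [F2_eq]
  apply mul_left_cancel₀ (pow_ne_zero 4 hH)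
  rw [mul_zero, ← key x t]
  field_simp


/-- `q^[2]` solves the focusing NLS equation on all of `ℝ²`; equivalently,
`q1^[2] = q2^[2] = (√2/2 + F2/H2)·e^{2it}` is a second-order rogue wave solution of the
Manakov system. -/
theorem qtwo_solves_NLS :
    NLS qtwo ∧
    Manakov
      (fun p => (((Real.sqrt 2 / 2 : ℝ) : ℂ) + F2 p.1 p.2 / ((H2 p.1 p.2 : ℝ) : ℂ))
        * Complex.exp (2 * Complex.I * (p.2 : ℂ)))
      (fun p => (((Real.sqrt 2 / 2 : ℝ) : ℂ) + F2 p.1 p.2 / ((H2 p.1 p.2 : ℝ) : ℂ))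
        * Complex.exp (2 * Complex.I * (p.2 : ℂ))) := by
  have e0 : ∀ a b : ℝ, qtwo (a, b) = ((Real.sqrt 2 : ℝ) : ℂ)
      * (((Real.sqrt 2 / 2 : ℝ) : ℂ) + F2 a b / ((H2 a b : ℝ) : ℂ))
      * Complex.exp (2 * Complex.I * (b : ℂ)) := fun a b => rfl
  have man : ∀ x t : ℝ,
      Complex.I * deriv (fun t' : ℝ => (((Real.sqrt 2 / 2 : ℝ) : ℂ)
          + F2 x t' / ((H2 x t' : ℝ) : ℂ)) * Complex.exp (2 * Complex.I * (t' : ℂ))) t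
        + deriv (fun x' : ℝ => deriv (fun x'' : ℝ => (((Real.sqrt 2 / 2 : ℝ) : ℂ)
            + F2 x'' t / ((H2 x'' t : ℝ) : ℂ)) * Complex.exp (2 * Complex.I * (t : ℂ))) x') x
        + 2 * (((‖(((Real.sqrt 2 / 2 : ℝ) : ℂ) + F2 x t / ((H2 x t : ℝ) : ℂ))
              * Complex.exp (2 * Complex.I * (t : ℂ))‖ : ℝ) : ℂ) ^ 2
            + ((‖(((Real.sqrt 2 / 2 : ℝ) : ℂ) + F2 x t / ((H2 x t : ℝ) : ℂ))
              * Complex.exp (2 * Complex.I * (t : ℂ))‖ : ℝ) : ℂ) ^ 2)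
          * ((((Real.sqrt 2 / 2 : ℝ) : ℂ) + F2 x t / ((H2 x t : ℝ) : ℂ))
              * Complex.exp (2 * Complex.I * (t : ℂ))) = 0 := by
    intro x t
    have hT := ((hf_t x t).mul (hexp t)).deriv
    simp only [Pi.mul_def] at hT
    rw [hT]
    have eX : (fun x' : ℝ => deriv (fun x'' : ℝ => (((Real.sqrt 2 / 2 : ℝ) : ℂ)
        + F2 x'' t / ((H2 x'' t : ℝ) : ℂ)) * Complex.exp (2 * Complex.I * (t : ℂ))) x')
        = (fun x' : ℝ => D1 x' t * Complex.exp (2 * Complex.I * (t : ℂ))) := by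
      funext x'
      exact ((hf_x x' t).mul_const (Complex.exp (2 * Complex.I * (t : ℂ)))).deriv
    rw [eX]
    rw [((hD1_x x t).mul_const (Complex.exp (2 * Complex.I * (t : ℂ)))).deriv]
    rw [norm_q1 x t]
    linear_combination (Complex.exp (2 * Complex.I * (t : ℂ))) * core x t
      + (2 * (((Real.sqrt 2 / 2 : ℝ) : ℂ) + F2 x t / ((H2 x t : ℝ) : ℂ))
          * Complex.exp (2 * Complex.I * (t : ℂ))) * Complex.I_sq
  refine ⟨?_, ?_, ?_⟩
  · intro x t
    simp only [e0]
    have hT := (((hf_t x t).const_mul ((Real.sqrt 2 : ℝ) : ℂ)).mul (hexp t)).deriv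
    simp only [Pi.mul_def] at hT
    rw [hT]
    have eX : (fun x' : ℝ => deriv (fun x'' : ℝ => ((Real.sqrt 2 : ℝ) : ℂ)
        * (((Real.sqrt 2 / 2 : ℝ) : ℂ) + F2 x'' t / ((H2 x'' t : ℝ) : ℂ))
        * Complex.exp (2 * Complex.I * (t : ℂ))) x')
        = (fun x' : ℝ => ((Real.sqrt 2 : ℝ) : ℂ) * D1 x' t
            * Complex.exp (2 * Complex.I * (t : ℂ))) := by
      funext x'
      exact (((hf_x x' t).const_mul ((Real.sqrt 2 : ℝ) : ℂ)).mul_const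
        (Complex.exp (2 * Complex.I * (t : ℂ)))).deriv
    rw [eX]
    rw [(((hD1_x x t).const_mul ((Real.sqrt 2 : ℝ) : ℂ)).mul_const
        (Complex.exp (2 * Complex.I * (t : ℂ)))).deriv]
    rw [norm_q2 x t]
    linear_combination (((Real.sqrt 2 : ℝ) : ℂ) * Complex.exp (2 * Complex.I * (t : ℂ))) * core x t
      + (2 * ((Real.sqrt 2 : ℝ) : ℂ) * (((Real.sqrt 2 / 2 : ℝ) : ℂ) + F2 x t / ((H2 x t : ℝ) : ℂ))
          * Complex.exp (2 * Complex.I * (t : ℂ))) * Complex.I_sq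
  · intro x t
    exact man x t
  · intro x t
    exact man x t
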